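/- Let G be an abelian group and F_n^1 = ⊕_{g∈G} A_g a G-grading with e_1 ∈ A_x and e_2 ∈ A_y for some x,y ∈ G. Then e_j ∈ A_{y+(j-2)x} for all 2 ≤ j ≤ n. -/
import Mathlib


/-- The bracket of the filiform Leibniz algebra `F_n^1` on `Fin n → ℂ`
(0-indexed: `[e i, e 0] = e (i+1)` for `1 ≤ i ≤ n-2`, other basis products zero). -/
def f1Br (n : ℕ) (x y : Fin n → ℂ) : Fin n → ℂ :=
  fun k => if _ : 2 ≤ (k : ℕ) then
    y ⟨0, k.pos⟩ * x ⟨(k : ℕ) - 1, Nat.lt_of_le_of_lt (Nat.sub_le _ _) k.isLt⟩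
  else 0

/-- If `e₁ ∈ A_x` and `e₂ ∈ A_y` in a `G`-grading of `F_n^1`, then
`e_j ∈ A_{y + (j-2)x}` for all `2 ≤ j ≤ n` (1-based `j`). -/
theorem f1_homogeneous_generators (n : ℕ) (G : Type*) [AddCommGroup G]
    [DecidableEq G] (A : G → Submodule ℂ (Fin n → ℂ))
    (hint : DirectSum.IsInternal A)
    (hgr : ∀ g h : G, ∀ u ∈ A g, ∀ v ∈ A h, f1Br n u v ∈ A (g + h))
    (x y : G) (hn : 2 ≤ n)
    (he1 : (Pi.single (⟨0, by omega⟩ : Fin n) (1 : ℂ)) ∈ A x)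
    (he2 : (Pi.single (⟨1, by omega⟩ : Fin n) (1 : ℂ)) ∈ A y) :
    ∀ j : Fin n, 1 ≤ (j : ℕ) →
      (Pi.single j (1 : ℂ) : Fin n → ℂ) ∈ A (y + ((j : ℕ) - 1) • x) := by

  suffices H : ∀ j : ℕ, ∀ hjn : j < n, 1 ≤ j →
      (Pi.single (⟨j, hjn⟩ : Fin n) (1 : ℂ) : Fin n → ℂ) ∈ A (y + (j - 1) • x) by
    intro j hj
    have := H j j.isLt hj
    simpa using this
  intro j
  induction j with
  | zero => intro _ h; omega
  | succ m ih =>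
    intro hjn _
    rcases Nat.lt_or_ge m 1 with hm | hm
    · interval_cases m
      simpa using he2
    · have hmn : m < n := by omega
      have hb := hgr _ _ _ (ih hmn hm) _ he1
      have key : f1Br n (Pi.single (⟨m, hmn⟩ : Fin n) 1)
          (Pi.single (⟨0, by omega⟩ : Fin n) 1)
          = Pi.single (⟨m + 1, hjn⟩ : Fin n) (1 : ℂ) := by
        funext k
        simp only [f1Br, Pi.single_apply, Fin.ext_iff]
        split_ifs <;> simp_all <;> omega
      rw [key] at hb
      have hsm : (m + 1 - 1) • x = (m - 1) • x + x := by
        obtain ⟨k, rfl⟩ : ∃ k, m = k + 1 := ⟨m - 1, by omega⟩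
        simp [succ_nsmul]
      rw [hsm, ← add_assoc]
      exact hb
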